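/- Probability integral transform: if Y is a real-valued random variable whose cumulative distribution function F is continuous on ℝ, then the random variable U := F(Y) is uniformly distributed on the unit interval, i.e., the pushforward of the law of Y under F is the uniform (Lebesgue) probability measure on [0,1]. -/

import Mathlib

open MeasureTheory

open Set Filter Topology in
/-- Probability integral transform: if `Y` is a real random variable whose CDF
`F t = P(Y ≤ t)` is continuous on `ℝ`, then `U = F (Y)` is uniformly distributed on the
unit interval, i.e. the pushforward of the law of `Y` under `F` is Lebesgue measure
restricted to `[0, 1]`. -/
theorem probability_integral_transform
    {Ω : Type*} [MeasurableSpace Ω] (μ : Measure Ω) [IsProbabilityMeasure μ]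
    (Y : Ω → ℝ) (hY : Measurable Y)
    (F : ℝ → ℝ) (hF : ∀ t, F t = (μ {ω | Y ω ≤ t}).toReal)
    (hcont : Continuous F) :
    Measure.map (fun ω => F (Y ω)) μ = volume.restrict (Set.Icc (0 : ℝ) 1) := by
  set ν := Measure.map Y μ with hν
  have hmapP : IsProbabilityMeasure ν := Measure.isProbabilityMeasure_map hY.aemeasurable
  have hFc : F = ProbabilityTheory.cdf ν := by
    funext t
    rw [hF t, ProbabilityTheory.cdf_eq_real, measureReal_def]
    congr 1
    rw [hν, Measure.map_apply hY measurableSet_Iic]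
    rfl
  have hmono : Monotone F := hFc ▸ ProbabilityTheory.monotone_cdf ν
  have h0 : ∀ x, 0 ≤ F x := fun x => hFc ▸ ProbabilityTheory.cdf_nonneg ν x
  have h1 : ∀ x, F x ≤ 1 := fun x => hFc ▸ ProbabilityTheory.cdf_le_one ν x
  have htop : Tendsto F atTop (𝓝 1) := hFc ▸ ProbabilityTheory.tendsto_cdf_atTop ν
  have hbot : Tendsto F atBot (𝓝 0) := hFc ▸ ProbabilityTheory.tendsto_cdf_atBot ν
  have hmeasY : ∀ t, μ {ω | Y ω ≤ t} = ENNReal.ofReal (F t) := by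
    intro t
    rw [hFc, ProbabilityTheory.ofReal_cdf, hν, Measure.map_apply hY measurableSet_Iic]
    rfl
  have hFm : Measurable fun ω => F (Y ω) := hcont.measurable.comp hY
  have : IsProbabilityMeasure (Measure.map (fun ω => F (Y ω)) μ) :=
    Measure.isProbabilityMeasure_map hFm.aemeasurable
  refine MeasureTheory.Measure.ext_of_Iic _ _ (fun u => ?_)
  rw [Measure.map_apply hFm measurableSet_Iic,
    Measure.restrict_apply measurableSet_Iic]
  rcases lt_or_ge u 0 with hu | hu
  · have hpre : (fun ω => F (Y ω)) ⁻¹' Iic u = ∅ := by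
      ext ω
      simp only [mem_preimage, mem_Iic, mem_empty_iff_false, iff_false, not_le]
      exact lt_of_lt_of_le hu (h0 _)
    have hrhs : Iic u ∩ Icc (0 : ℝ) 1 = ∅ := by
      ext x
      simp only [mem_inter_iff, mem_Iic, mem_Icc, mem_empty_iff_false, iff_false]
      rintro ⟨h1', h2', _⟩
      linarith
    rw [hpre, hrhs, measure_empty, measure_empty]
  rcases le_or_gt 1 u with hu1 | hu1
  · have hpre : (fun ω => F (Y ω)) ⁻¹' Iic u = univ := by
      ext ω
      simp only [mem_preimage, mem_Iic, mem_univ, iff_true]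
      exact le_trans (h1 _) hu1
    have hrhs : Iic u ∩ Icc (0 : ℝ) 1 = Icc 0 1 := by
      ext x
      simp only [mem_inter_iff, mem_Iic, mem_Icc, and_iff_right_iff_imp]
      rintro ⟨_, h2'⟩
      linarith
    rw [hpre, hrhs, measure_univ, Real.volume_Icc]
    norm_num
  · -- 0 ≤ u < 1
    have hrhs : Iic u ∩ Icc (0 : ℝ) 1 = Icc 0 u := by
      ext x
      simp only [mem_inter_iff, mem_Iic, mem_Icc]
      constructor
      · rintro ⟨h1', h2', _⟩; exact ⟨h2', h1'⟩
      · rintro ⟨h1', h2'⟩; exact ⟨h2', h1', by linarith⟩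
    rw [hrhs, Real.volume_Icc]
    set S : Set ℝ := {x | F x ≤ u} with hS
    have hSclosed : IsClosed S := isClosed_le hcont continuous_const
    have hSbdd : BddAbove S := by
      obtain ⟨x, hx⟩ := (htop.eventually (eventually_gt_nhds hu1)).exists
      refine ⟨x, fun y hy => ?_⟩
      by_contra hxy
      push_neg at hxy
      exact absurd (le_trans (hmono hxy.le) hy) (not_le.mpr hx)
    by_cases hSne : S.Nonempty
    · set t := sSup S with ht
      have htmem : t ∈ S := hSclosed.csSup_mem hSne hSbdd
      have hFt_le : F t ≤ u := htmem
      have hFt_ge : u ≤ F t := by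
        by_contra hlt
        push_neg at hlt
        -- F t < u, by continuity there is x > t with F x < u
        have : ∀ᶠ x in 𝓝 t, F x < u := hcont.continuousAt.eventually_lt_const hlt
        obtain ⟨x, hxt, hx⟩ := this.exists_gt
        exact absurd (le_csSup hSbdd (le_of_lt hx)) (not_le.mpr hxt)
      have hFt : F t = u := le_antisymm hFt_le hFt_ge
      have hpre : (fun ω => F (Y ω)) ⁻¹' Iic u = {ω | Y ω ≤ t} := by
        ext ω
        simp only [mem_preimage, mem_Iic, mem_setOf_eq]
        constructor
        · intro h
          exact le_csSup hSbdd h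
        · intro h
          exact le_trans (hmono h) hFt_le
      rw [hpre, hmeasY, hFt, sub_zero]
    ·
      -- only possible if u = 0 never attained.
      rw [not_nonempty_iff_eq_empty] at hSne
      have hu0 : u = 0 := by
        by_contra h
        have hupos : 0 < u := lt_of_le_of_ne hu (Ne.symm h)
        obtain ⟨x, hx⟩ := (hbot.eventually (eventually_lt_nhds hupos)).exists
        have : x ∈ S := le_of_lt hx
        rw [hSne] at this
        exact this
      have hpre : (fun ω => F (Y ω)) ⁻¹' Iic u = ∅ := by
        ext ω
        simp only [mem_preimage, mem_Iic, mem_empty_iff_false, iff_false, not_le]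
        by_contra h
        push_neg at h
        have : Y ω ∈ S := h
        rw [hSne] at this
        exact this
      rw [hpre, measure_empty, hu0, sub_zero, ENNReal.ofReal_zero]
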